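/- Let p(t,x) = (1/(2π)) ∫_{−π}^{π} e^{−2t(1−cos θ)} cos(xθ) dθ for t > 0 and x ∈ ℤ (the fundamental solution of the discrete heat equation on ℤ). Then for every α ∈ (0, 1/2] there exists a constant C > 0 such that: (i) p(t,x) ≤ C·t^{−1/2} for all t > 0 and x ∈ ℤ; (ii) |p(t,x) − p(t,y)| ≤ C·|x−y|^{2α}·t^{−1/2−α} for all t > 0 and x, y ∈ ℤ; (iii) |p(t+h,x) − p(t,x)| ≤ C·h^{2α}·t^{−1/2−2α} for all t > 0, h > 0 and x ∈ ℤ. -/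

import Mathlib

open Real MeasureTheory Set Filter

/-- The fundamental solution of the discrete heat equation on `ℤ`:
`p(t,x) = (1/(2π)) ∫_{-π}^{π} e^{-2t(1-cos θ)} cos(xθ) dθ`. -/
noncomputable def discHeat (t : ℝ) (x : ℤ) : ℝ :=
  (1 / (2 * Real.pi)) *
    ∫ θ in (-Real.pi)..Real.pi, Real.exp (-2 * t * (1 - Real.cos θ)) * Real.cos (x * θ)

lemma sqRpow (θ γ : ℝ) : (θ^2 : ℝ) ^ γ = |θ| ^ (2*γ) := by
  rw [← sq_abs, ← Real.rpow_natCast |θ| 2, ← Real.rpow_mul (abs_nonneg θ)]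
  norm_num

lemma auxRpowExp {s γ : ℝ} (hs : 0 ≤ s) (h0 : 0 ≤ γ) (h1 : γ ≤ 1) :
    s ^ γ * Real.exp (-(s/2)) ≤ 2 := by
  have h2 : s ^ γ ≤ 1 + s := by
    rcases le_total s 1 with h | h
    · have := Real.rpow_le_one hs h h0
      linarith
    · have := Real.rpow_le_rpow_of_exponent_le h h1
      rw [Real.rpow_one] at this
      linarith
  have h3 : 1 + s ≤ 2 * Real.exp (s/2) := by
    have := Real.add_one_le_exp (s/2)
    nlinarith [Real.exp_pos (s/2)]
  have h4 : s ^ γ * Real.exp (-(s/2)) ≤ (1+s) * Real.exp (-(s/2)) :=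
    mul_le_mul_of_nonneg_right h2 (Real.exp_pos _).le
  rw [Real.exp_neg] at h4 ⊢
  refine h4.trans ?_
  rw [mul_inv_le_iff₀ (Real.exp_pos _)]
  linarith

lemma minOneLeRpow {v γ : ℝ} (hv : 0 ≤ v) (h0 : 0 < γ) (h1 : γ ≤ 1) :
    min 1 v ≤ v ^ γ := by
  rcases le_total v 1 with h | h
  · rcases eq_or_lt_of_le hv with h'|h'
    · simp [← h', Real.zero_rpow h0.ne']
    · have : v ^ (1:ℝ) ≤ v ^ γ := Real.rpow_le_rpow_of_exponent_ge h' h h1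
      rw [Real.rpow_one] at this
      exact (min_le_right _ _).trans this
  · have : v ^ (0:ℝ) ≤ v ^ γ := Real.rpow_le_rpow_of_exponent_le h h0.le
    rw [Real.rpow_zero] at this
    exact (min_le_left _ _).trans this

lemma minTwoLeRpow {w γ : ℝ} (hw : 0 ≤ w) (h0 : 0 < γ) (h1 : γ ≤ 1) :
    min 2 w ≤ 2 ^ (1-γ) * w ^ γ := by
  rcases le_total w 2 with h | h
  · rcases eq_or_lt_of_le hw with h'|h'
    · simp [← h', Real.zero_rpow h0.ne']
    · have hsp : w = w ^ (1-γ) * w ^ γ := by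
        rw [← Real.rpow_add h', sub_add_cancel, Real.rpow_one]
      have hle : w ^ (1-γ) ≤ 2 ^ (1-γ) := Real.rpow_le_rpow h'.le h (by linarith)
      calc min 2 w ≤ w := min_le_right _ _
        _ = w ^ (1-γ) * w ^ γ := hsp
        _ ≤ 2 ^ (1-γ) * w ^ γ := mul_le_mul_of_nonneg_right hle (Real.rpow_nonneg h'.le _)
  · have hsp : (2:ℝ) = 2 ^ (1-γ) * 2 ^ γ := by
      rw [← Real.rpow_add two_pos, sub_add_cancel, Real.rpow_one]
    have hle : (2:ℝ) ^ γ ≤ w ^ γ := Real.rpow_le_rpow (by norm_num) h h0.le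
    calc min 2 w ≤ 2 := min_le_left _ _
      _ = 2 ^ (1-γ) * 2 ^ γ := hsp
      _ ≤ 2 ^ (1-γ) * w ^ γ := mul_le_mul_of_nonneg_left hle (Real.rpow_nonneg (by norm_num) _)

lemma cosHolder {γ : ℝ} (h0 : 0 < γ) (h1 : γ ≤ 1) (a b : ℝ) :
    |Real.cos a - Real.cos b| ≤ 2 ^ (1-γ) * |a-b| ^ γ := by
  have hlip : |Real.cos a - Real.cos b| ≤ |a - b| := by
    rw [Real.cos_sub_cos]
    have ha : |Real.sin ((a+b)/2)| ≤ 1 := abs_le.mpr ⟨Real.neg_one_le_sin _, Real.sin_le_one _⟩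
    have hb : |Real.sin ((a-b)/2)| ≤ |(a-b)/2| := Real.abs_sin_le_abs
    calc |(-2) * Real.sin ((a+b)/2) * Real.sin ((a-b)/2)|
        = 2 * (|Real.sin ((a+b)/2)| * |Real.sin ((a-b)/2)|) := by
          rw [abs_mul, abs_mul]; norm_num; ring
      _ ≤ 2 * (1 * |(a-b)/2|) := by
          apply mul_le_mul_of_nonneg_left _ (by norm_num)
          exact mul_le_mul ha hb (abs_nonneg _) zero_le_one
      _ = |a - b| := by rw [abs_div]; norm_num; ring
  have hb2 : |Real.cos a - Real.cos b| ≤ min 2 |a-b| := by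
    refine le_min ?_ hlip
    calc |Real.cos a - Real.cos b| ≤ |Real.cos a| + |Real.cos b| := abs_sub _ _
      _ ≤ 2 := by
          have := Real.abs_cos_le_one a; have := Real.abs_cos_le_one b; linarith
  exact hb2.trans (minTwoLeRpow (abs_nonneg _) h0 h1)

lemma pointwiseBound {b β : ℝ} (hb : 0 < b) (h0 : 0 ≤ β) (h2 : β ≤ 2) (θ : ℝ) :
    |θ| ^ β * Real.exp (-(b * θ^2)) ≤ 2 * b ^ (-β/2) * Real.exp (-(b/2) * θ^2) := by
  have hs : 0 ≤ b * θ^2 := by positivity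
  have key := auxRpowExp hs (by linarith : (0:ℝ) ≤ β/2) (by linarith : β/2 ≤ 1)
  have habs : |θ| ^ β = (b * θ^2) ^ (β/2) * b ^ (-β/2) := by
    rw [Real.mul_rpow hb.le (sq_nonneg θ), sqRpow, mul_right_comm,
      ← Real.rpow_add hb, show β/2 + -β/2 = 0 by ring, Real.rpow_zero, one_mul,
      show 2*(β/2) = β by ring]
  have hexp : Real.exp (-(b * θ^2)) =
      Real.exp (-(b * θ^2 / 2)) * Real.exp (-(b/2) * θ^2) := by
    rw [← Real.exp_add]; ring_nf
  rw [habs, hexp]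
  have hnn : (0:ℝ) ≤ b ^ (-β/2) * Real.exp (-(b/2) * θ^2) := by positivity
  calc (b * θ^2) ^ (β/2) * b ^ (-β/2) * (Real.exp (-(b * θ^2 / 2)) * Real.exp (-(b/2) * θ^2))
      = ((b * θ^2) ^ (β/2) * Real.exp (-(b * θ^2 / 2))) * (b ^ (-β/2) * Real.exp (-(b/2) * θ^2)) := by
        ring
    _ ≤ 2 * (b ^ (-β/2) * Real.exp (-(b/2) * θ^2)) := by
        apply mul_le_mul_of_nonneg_right _ hnn
        calc (b * θ^2) ^ (β/2) * Real.exp (-(b * θ^2 / 2))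
            = (b * θ^2) ^ (β/2) * Real.exp (-((b * θ^2) / 2)) := by ring_nf
          _ ≤ 2 := key
    _ = 2 * b ^ (-β/2) * Real.exp (-(b/2) * θ^2) := by ring

lemma masterInt {b β : ℝ} (hb : 0 < b) (h0 : 0 ≤ β) (h2 : β ≤ 2) :
    ∫ θ in (-Real.pi)..Real.pi, |θ| ^ β * Real.exp (-(b * θ^2))
      ≤ 2 * Real.sqrt (2*Real.pi) * b ^ (-(β+1)/2) := by
  have hpi : -Real.pi ≤ Real.pi := by linarith [Real.pi_pos]
  have cf : Continuous fun θ:ℝ => |θ| ^ β * Real.exp (-(b * θ^2)) := by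
    apply Continuous.mul
    · exact continuous_abs.rpow_const (fun x => Or.inr h0)
    · fun_prop
  have cg : Continuous fun θ:ℝ => 2 * b ^ (-β/2) * Real.exp (-(b/2) * θ^2) := by fun_prop
  have hgint : Integrable fun θ:ℝ => 2 * b ^ (-β/2) * Real.exp (-(b/2) * θ^2) :=
    (integrable_exp_neg_mul_sq (half_pos hb)).const_mul _
  have step1 : ∫ θ in (-Real.pi)..Real.pi, |θ| ^ β * Real.exp (-(b * θ^2))
      ≤ ∫ θ in (-Real.pi)..Real.pi, 2 * b ^ (-β/2) * Real.exp (-(b/2) * θ^2) :=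
    intervalIntegral.integral_mono_on hpi (cf.intervalIntegrable _ _) (cg.intervalIntegrable _ _)
      (fun x _ => pointwiseBound hb h0 h2 x)
  have step2 : ∫ θ in (-Real.pi)..Real.pi, 2 * b ^ (-β/2) * Real.exp (-(b/2) * θ^2)
      ≤ ∫ θ : ℝ, 2 * b ^ (-β/2) * Real.exp (-(b/2) * θ^2) := by
    rw [intervalIntegral.integral_of_le hpi]
    apply setIntegral_le_integral hgint
    filter_upwards with x
    positivity
  have step3 : ∫ θ : ℝ, 2 * b ^ (-β/2) * Real.exp (-(b/2) * θ^2)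
      = 2 * Real.sqrt (2*Real.pi) * b ^ (-(β+1)/2) := by
    rw [MeasureTheory.integral_const_mul, integral_gaussian]
    have e1 : Real.pi / (b/2) = 2*Real.pi * b⁻¹ := by field_simp
    rw [e1, Real.sqrt_mul (by positivity) b⁻¹, Real.sqrt_inv]
    have e2 : (Real.sqrt b)⁻¹ = b ^ (-(1:ℝ)/2) := by
      rw [show (-(1:ℝ)/2) = -(1/2) by norm_num, Real.rpow_neg hb.le, Real.sqrt_eq_rpow]
    rw [e2, show (-(β+1)/2 : ℝ) = -β/2 + -(1:ℝ)/2 by ring, Real.rpow_add hb]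
    ring
  linarith [step1, step2, step3.le, step3.ge]

lemma coreInt {t β : ℝ} (ht : 0 < t) (h0 : 0 ≤ β) (h2 : β ≤ 2) :
    ∫ θ in (-Real.pi)..Real.pi, |θ| ^ β * Real.exp (-2*t*(1-Real.cos θ))
      ≤ (2 * Real.sqrt (2*Real.pi) * (4/Real.pi^2) ^ (-(β+1)/2)) * t ^ (-(β+1)/2) := by
  have hπ := Real.pi_pos
  have hpi : -Real.pi ≤ Real.pi := by linarith
  have hb : (0:ℝ) < 4/Real.pi^2 * t := by positivity
  have cf : Continuous fun θ:ℝ => |θ| ^ β * Real.exp (-2*t*(1-Real.cos θ)) := by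
    apply Continuous.mul
    · exact continuous_abs.rpow_const (fun x => Or.inr h0)
    · fun_prop
  have cg : Continuous fun θ:ℝ => |θ| ^ β * Real.exp (-(4/Real.pi^2*t * θ^2)) := by
    apply Continuous.mul
    · exact continuous_abs.rpow_const (fun x => Or.inr h0)
    · fun_prop
  have step1 : ∫ θ in (-Real.pi)..Real.pi, |θ| ^ β * Real.exp (-2*t*(1-Real.cos θ))
      ≤ ∫ θ in (-Real.pi)..Real.pi, |θ| ^ β * Real.exp (-(4/Real.pi^2*t * θ^2)) := by
    apply intervalIntegral.integral_mono_on hpi (cf.intervalIntegrable _ _)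
      (cg.intervalIntegrable _ _)
    intro x hx
    apply mul_le_mul_of_nonneg_left _ (Real.rpow_nonneg (abs_nonneg x) β)
    apply Real.exp_le_exp.mpr
    have hcos := Real.cos_le_one_sub_mul_cos_sq
      (show |x| ≤ Real.pi from abs_le.mpr ⟨hx.1, hx.2⟩)
    have hπ2 : (0:ℝ) < Real.pi^2 := by positivity
    have key : 2 / Real.pi^2 * x^2 ≤ 1 - Real.cos x := by linarith
    have h1 := mul_le_mul_of_nonneg_left key (by positivity : (0:ℝ) ≤ 2*t)
    have h2 : 4 / Real.pi^2 * t * x^2 = 2*t*(2/Real.pi^2*x^2) := by ring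
    linarith [h1]
  have step2 := masterInt hb h0 h2
  have e : (4/Real.pi^2*t) ^ (-(β+1)/2)
      = (4/Real.pi^2) ^ (-(β+1)/2) * t ^ (-(β+1)/2) :=
    Real.mul_rpow (by positivity) ht.le
  rw [e] at step2
  calc _ ≤ _ := step1
    _ ≤ _ := step2
    _ = (2 * Real.sqrt (2*Real.pi) * (4/Real.pi^2) ^ (-(β+1)/2)) * t ^ (-(β+1)/2) := by ring

set_option maxHeartbeats 1600000 in
theorem discrete_heat_kernel_estimates :
    ∀ α ∈ Set.Ioc (0:ℝ) (1/2), ∃ C > (0:ℝ),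
      (∀ t > (0:ℝ), ∀ x : ℤ, discHeat t x ≤ C * t ^ (-(1:ℝ)/2)) ∧
      (∀ t > (0:ℝ), ∀ x y : ℤ,
        |discHeat t x - discHeat t y| ≤ C * |(x:ℝ) - (y:ℝ)| ^ (2 * α) * t ^ (-(1:ℝ)/2 - α)) ∧
      (∀ t > (0:ℝ), ∀ h > (0:ℝ), ∀ x : ℤ,
        |discHeat (t + h) x - discHeat t x| ≤ C * h ^ (2 * α) * t ^ (-(1:ℝ)/2 - 2 * α)) := by
  intro α hα
  obtain ⟨hα0, hα2⟩ := hα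
  have hπ := Real.pi_pos
  have hpi : -Real.pi ≤ Real.pi := by linarith
  set c1 : ℝ := 1/(2*Real.pi) * (2 * Real.sqrt (2*Real.pi) * (4/Real.pi^2) ^ (-(1:ℝ)/2)) with hc1
  set c2 : ℝ := 1/(2*Real.pi) * (2 ^ (1-2*α) *
    (2 * Real.sqrt (2*Real.pi) * (4/Real.pi^2) ^ (-(1:ℝ)/2 - α))) with hc2
  set c3 : ℝ := 1/(2*Real.pi) * (2 * Real.sqrt (2*Real.pi) *
    (4/Real.pi^2) ^ (-(1:ℝ)/2 - 2*α)) with hc3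
  have hsq : (0:ℝ) < Real.sqrt (2*Real.pi) := Real.sqrt_pos.mpr (by positivity)
  have h2r : (0:ℝ) < (2:ℝ) ^ (1-2*α) := Real.rpow_pos_of_pos two_pos _
  have hr1 : (0:ℝ) < (4/Real.pi^2) ^ (-(1:ℝ)/2) := Real.rpow_pos_of_pos (by positivity) _
  have hr2 : (0:ℝ) < (4/Real.pi^2) ^ (-(1:ℝ)/2 - α) := Real.rpow_pos_of_pos (by positivity) _
  have hr3 : (0:ℝ) < (4/Real.pi^2) ^ (-(1:ℝ)/2 - 2*α) := Real.rpow_pos_of_pos (by positivity) _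
  have hc1p : 0 < c1 := by rw [hc1]; positivity
  have hc2p : 0 < c2 := by rw [hc2]; positivity
  have hc3p : 0 < c3 := by rw [hc3]; positivity
  refine ⟨c1 + c2 + c3, by positivity, ?_, ?_, ?_⟩
  · -- part (i)
    intro t ht x
    have step1 : ∫ θ in (-Real.pi)..Real.pi, Real.exp (-2*t*(1-Real.cos θ)) * Real.cos (x*θ)
        ≤ ∫ θ in (-Real.pi)..Real.pi, |θ| ^ (0:ℝ) * Real.exp (-2*t*(1-Real.cos θ)) := by
      apply intervalIntegral.integral_mono_on hpi
        ((by fun_prop : Continuous fun θ:ℝ =>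
          Real.exp (-2*t*(1-Real.cos θ)) * Real.cos (x*θ)).intervalIntegrable _ _)
        ((Continuous.mul (continuous_abs.rpow_const (fun x => Or.inr le_rfl))
          (by fun_prop)).intervalIntegrable _ _)
      intro θ _
      simp only [Pi.mul_apply]
      rw [Real.rpow_zero, one_mul]
      calc Real.exp (-2*t*(1-Real.cos θ)) * Real.cos (x*θ)
          ≤ Real.exp (-2*t*(1-Real.cos θ)) * 1 :=
            mul_le_mul_of_nonneg_left (Real.cos_le_one _) (Real.exp_pos _).le
        _ = Real.exp (-2*t*(1-Real.cos θ)) := mul_one _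
    have step2 := coreInt ht (le_refl (0:ℝ)) (by norm_num : (0:ℝ) ≤ 2)
    rw [show (-((0:ℝ)+1)/2 : ℝ) = -(1:ℝ)/2 by norm_num] at step2
    have h12 : (0:ℝ) < 1/(2*Real.pi) := by positivity
    calc discHeat t x
        = 1/(2*Real.pi) * ∫ θ in (-Real.pi)..Real.pi,
            Real.exp (-2*t*(1-Real.cos θ)) * Real.cos (x*θ) := rfl
      _ ≤ 1/(2*Real.pi) * (2 * Real.sqrt (2*Real.pi) * (4/Real.pi^2) ^ (-(1:ℝ)/2)
            * t ^ (-(1:ℝ)/2)) :=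
          mul_le_mul_of_nonneg_left (step1.trans step2) h12.le
      _ = c1 * t ^ (-(1:ℝ)/2) := by rw [hc1]; ring
      _ ≤ (c1 + c2 + c3) * t ^ (-(1:ℝ)/2) := by
          apply mul_le_mul_of_nonneg_right (by linarith) (Real.rpow_nonneg ht.le _)
  · -- part (ii)
    intro t ht x y
    have h2α0 : (0:ℝ) < 2*α := by linarith
    have h2α1 : 2*α ≤ 1 := by linarith
    set d : ℝ := |(x:ℝ) - (y:ℝ)| with hd
    have hdnn : 0 ≤ d := abs_nonneg _
    have hptw : ∀ θ ∈ Icc (-Real.pi) Real.pi,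
        |Real.exp (-2*t*(1-Real.cos θ)) * Real.cos (x*θ)
          - Real.exp (-2*t*(1-Real.cos θ)) * Real.cos (y*θ)|
        ≤ (2 ^ (1-2*α) * d ^ (2*α)) * (|θ| ^ (2*α) * Real.exp (-2*t*(1-Real.cos θ))) := by
      intro θ _
      rw [← mul_sub, abs_mul, Real.abs_exp]
      have hch := cosHolder h2α0 h2α1 ((x:ℝ)*θ) ((y:ℝ)*θ)
      have he : |(x:ℝ)*θ - (y:ℝ)*θ| = d * |θ| := by
        rw [show (x:ℝ)*θ - (y:ℝ)*θ = ((x:ℝ) - (y:ℝ)) * θ by ring, abs_mul]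
      rw [he, Real.mul_rpow hdnn (abs_nonneg θ)] at hch
      calc Real.exp (-2*t*(1-Real.cos θ)) * |Real.cos ((x:ℝ)*θ) - Real.cos ((y:ℝ)*θ)|
          ≤ Real.exp (-2*t*(1-Real.cos θ)) * (2 ^ (1-2*α) * (d ^ (2*α) * |θ| ^ (2*α))) :=
            mul_le_mul_of_nonneg_left hch (Real.exp_pos _).le
        _ = (2 ^ (1-2*α) * d ^ (2*α)) * (|θ| ^ (2*α) * Real.exp (-2*t*(1-Real.cos θ))) := by
            ring
    have cF : ∀ z : ℤ, Continuous fun θ:ℝ =>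
        Real.exp (-2*t*(1-Real.cos θ)) * Real.cos ((z:ℝ)*θ) := by intro z; fun_prop
    have cG : Continuous fun θ:ℝ => |θ| ^ (2*α) * Real.exp (-2*t*(1-Real.cos θ)) :=
      Continuous.mul (continuous_abs.rpow_const (fun x => Or.inr (by linarith))) (by fun_prop)
    have hsub : discHeat t x - discHeat t y = 1/(2*Real.pi) *
        ∫ θ in (-Real.pi)..Real.pi,
          (Real.exp (-2*t*(1-Real.cos θ)) * Real.cos (x*θ)
            - Real.exp (-2*t*(1-Real.cos θ)) * Real.cos (y*θ)) := by
      rw [intervalIntegral.integral_sub ((cF x).intervalIntegrable _ _)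
        ((cF y).intervalIntegrable _ _)]
      simp only [discHeat]
      ring
    have step2 := coreInt ht (by linarith : (0:ℝ) ≤ 2*α) (by linarith : 2*α ≤ 2)
    rw [show (-(2*α+1)/2 : ℝ) = -(1:ℝ)/2 - α by ring] at step2
    calc |discHeat t x - discHeat t y|
        = 1/(2*Real.pi) * |∫ θ in (-Real.pi)..Real.pi,
            (Real.exp (-2*t*(1-Real.cos θ)) * Real.cos (x*θ)
              - Real.exp (-2*t*(1-Real.cos θ)) * Real.cos (y*θ))| := by
          rw [hsub, abs_mul, abs_of_nonneg (by positivity : (0:ℝ) ≤ 1/(2*Real.pi))]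
      _ ≤ 1/(2*Real.pi) * ∫ θ in (-Real.pi)..Real.pi,
            |Real.exp (-2*t*(1-Real.cos θ)) * Real.cos (x*θ)
              - Real.exp (-2*t*(1-Real.cos θ)) * Real.cos (y*θ)| :=
          mul_le_mul_of_nonneg_left
            (intervalIntegral.abs_integral_le_integral_abs hpi) (by positivity)
      _ ≤ 1/(2*Real.pi) * ∫ θ in (-Real.pi)..Real.pi,
            (2 ^ (1-2*α) * d ^ (2*α)) * (|θ| ^ (2*α) * Real.exp (-2*t*(1-Real.cos θ))) := by
          apply mul_le_mul_of_nonneg_left _ (by positivity : (0:ℝ) ≤ 1/(2*Real.pi))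
          apply intervalIntegral.integral_mono_on hpi
            (((cF x).sub (cF y)).abs.intervalIntegrable _ _)
            ((continuous_const.mul cG).intervalIntegrable _ _) hptw
      _ = 1/(2*Real.pi) * ((2 ^ (1-2*α) * d ^ (2*α)) *
            ∫ θ in (-Real.pi)..Real.pi, |θ| ^ (2*α) * Real.exp (-2*t*(1-Real.cos θ))) := by
          rw [intervalIntegral.integral_const_mul]
      _ ≤ 1/(2*Real.pi) * ((2 ^ (1-2*α) * d ^ (2*α)) * (2 * Real.sqrt (2*Real.pi) *
            (4/Real.pi^2) ^ (-(1:ℝ)/2 - α) * t ^ (-(1:ℝ)/2 - α))) := by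
          apply mul_le_mul_of_nonneg_left _ (by positivity : (0:ℝ) ≤ 1/(2*Real.pi))
          apply mul_le_mul_of_nonneg_left step2
          positivity
      _ = c2 * d ^ (2*α) * t ^ (-(1:ℝ)/2 - α) := by rw [hc2]; ring
      _ ≤ (c1 + c2 + c3) * d ^ (2*α) * t ^ (-(1:ℝ)/2 - α) := by
          have h1 : (0:ℝ) ≤ d ^ (2*α) := Real.rpow_nonneg hdnn _
          have h2 : (0:ℝ) ≤ t ^ (-(1:ℝ)/2 - α) := Real.rpow_nonneg ht.le _
          have : c2 ≤ c1 + c2 + c3 := by linarith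
          apply mul_le_mul_of_nonneg_right _ h2
          exact mul_le_mul_of_nonneg_right this h1
  · -- part (iii)
    intro t ht h hh x
    have h2α0 : (0:ℝ) < 2*α := by linarith
    have h2α1 : 2*α ≤ 1 := by linarith
    have hptw : ∀ θ ∈ Icc (-Real.pi) Real.pi,
        |Real.exp (-2*(t+h)*(1-Real.cos θ)) * Real.cos (x*θ)
          - Real.exp (-2*t*(1-Real.cos θ)) * Real.cos (x*θ)|
        ≤ h ^ (2*α) * (|θ| ^ (2*(2*α)) * Real.exp (-2*t*(1-Real.cos θ))) := by
      intro θ _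
      have hu : (0:ℝ) ≤ 1 - Real.cos θ := by linarith [Real.cos_le_one θ]
      have hhu : (0:ℝ) ≤ 2*h*(1 - Real.cos θ) :=
        mul_nonneg (mul_nonneg (by norm_num) hh.le) hu
      have hsplit : Real.exp (-2*(t+h)*(1 - Real.cos θ))
          = Real.exp (-2*t*(1 - Real.cos θ)) * Real.exp (-(2*h*(1 - Real.cos θ))) := by
        rw [← Real.exp_add]; ring_nf
      have hmin : 1 - Real.exp (-(2*h*(1 - Real.cos θ))) ≤ min 1 (2*h*(1 - Real.cos θ)) := by
        refine le_min (by linarith [Real.exp_pos (-(2*h*(1 - Real.cos θ)))]) ?_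
        have := Real.add_one_le_exp (-(2*h*(1 - Real.cos θ)))
        linarith
      have hmin2 : min 1 (2*h*(1 - Real.cos θ)) ≤ (2*h*(1 - Real.cos θ)) ^ (2*α) :=
        minOneLeRpow hhu h2α0 h2α1
      have huθ : 2*h*(1 - Real.cos θ) ≤ h * θ^2 := by
        have h1 : 1 - Real.cos θ ≤ θ^2/2 := by
          have := Real.one_sub_sq_div_two_le_cos (x := θ)
          linarith
        have h2 := mul_le_mul_of_nonneg_left h1 hh.le
        have h3 : 2*h*(1 - Real.cos θ) = 2*(h*(1 - Real.cos θ)) := by ring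
        have h4 : h * θ^2 = 2*(h*(θ^2/2)) := by ring
        linarith [h2]
      have hmin3 : (2*h*(1 - Real.cos θ)) ^ (2*α) ≤ (h * θ^2) ^ (2*α) :=
        Real.rpow_le_rpow hhu huθ (by linarith)
      have hmin4 : (h * θ^2) ^ (2*α) = h ^ (2*α) * |θ| ^ (2*(2*α)) := by
        rw [Real.mul_rpow hh.le (sq_nonneg θ), sqRpow]
      have hexple : Real.exp (-2*(t+h)*(1 - Real.cos θ)) ≤ Real.exp (-2*t*(1 - Real.cos θ)) := by
        apply Real.exp_le_exp.mpr
        linarith [mul_nonneg hh.le hu]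
      calc |Real.exp (-2*(t+h)*(1 - Real.cos θ)) * Real.cos (x*θ)
              - Real.exp (-2*t*(1 - Real.cos θ)) * Real.cos (x*θ)|
          = |Real.cos ((x:ℝ)*θ)| * |Real.exp (-2*(t+h)*(1 - Real.cos θ))
              - Real.exp (-2*t*(1 - Real.cos θ))| := by
            rw [← abs_mul]; ring_nf
        _ ≤ 1 * |Real.exp (-2*(t+h)*(1 - Real.cos θ)) - Real.exp (-2*t*(1 - Real.cos θ))| :=
            mul_le_mul_of_nonneg_right (Real.abs_cos_le_one _) (abs_nonneg _)
        _ = Real.exp (-2*t*(1 - Real.cos θ)) * (1 - Real.exp (-(2*h*(1 - Real.cos θ)))) := by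
            rw [one_mul, abs_of_nonpos (sub_nonpos.mpr hexple), hsplit]
            ring
        _ ≤ Real.exp (-2*t*(1 - Real.cos θ)) * ((2*h*(1 - Real.cos θ)) ^ (2*α)) :=
            mul_le_mul_of_nonneg_left (hmin.trans hmin2) (Real.exp_pos _).le
        _ ≤ Real.exp (-2*t*(1 - Real.cos θ)) * ((h * θ^2) ^ (2*α)) :=
            mul_le_mul_of_nonneg_left hmin3 (Real.exp_pos _).le
        _ = h ^ (2*α) * (|θ| ^ (2*(2*α)) * Real.exp (-2*t*(1 - Real.cos θ))) := by
            rw [hmin4]; ring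
    have cF : ∀ s : ℝ, Continuous fun θ:ℝ =>
        Real.exp (-2*s*(1-Real.cos θ)) * Real.cos ((x:ℝ)*θ) := by intro s; fun_prop
    have cG : Continuous fun θ:ℝ => |θ| ^ (2*(2*α)) * Real.exp (-2*t*(1-Real.cos θ)) :=
      Continuous.mul (continuous_abs.rpow_const (fun x => Or.inr (by linarith))) (by fun_prop)
    have hsub : discHeat (t+h) x - discHeat t x = 1/(2*Real.pi) *
        ∫ θ in (-Real.pi)..Real.pi,
          (Real.exp (-2*(t+h)*(1-Real.cos θ)) * Real.cos (x*θ)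
            - Real.exp (-2*t*(1-Real.cos θ)) * Real.cos (x*θ)) := by
      rw [intervalIntegral.integral_sub ((cF (t+h)).intervalIntegrable _ _)
        ((cF t).intervalIntegrable _ _)]
      simp only [discHeat]
      ring
    have step2 := coreInt ht (by linarith : (0:ℝ) ≤ 2*(2*α)) (by linarith : 2*(2*α) ≤ 2)
    rw [show (-(2*(2*α)+1)/2 : ℝ) = -(1:ℝ)/2 - 2*α by ring] at step2
    calc |discHeat (t+h) x - discHeat t x|
        = 1/(2*Real.pi) * |∫ θ in (-Real.pi)..Real.pi,
            (Real.exp (-2*(t+h)*(1-Real.cos θ)) * Real.cos (x*θ)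
              - Real.exp (-2*t*(1-Real.cos θ)) * Real.cos (x*θ))| := by
          rw [hsub, abs_mul, abs_of_nonneg (by positivity : (0:ℝ) ≤ 1/(2*Real.pi))]
      _ ≤ 1/(2*Real.pi) * ∫ θ in (-Real.pi)..Real.pi,
            |Real.exp (-2*(t+h)*(1-Real.cos θ)) * Real.cos (x*θ)
              - Real.exp (-2*t*(1-Real.cos θ)) * Real.cos (x*θ)| :=
          mul_le_mul_of_nonneg_left
            (intervalIntegral.abs_integral_le_integral_abs hpi) (by positivity)
      _ ≤ 1/(2*Real.pi) * ∫ θ in (-Real.pi)..Real.pi,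
            h ^ (2*α) * (|θ| ^ (2*(2*α)) * Real.exp (-2*t*(1-Real.cos θ))) := by
          apply mul_le_mul_of_nonneg_left _ (by positivity : (0:ℝ) ≤ 1/(2*Real.pi))
          apply intervalIntegral.integral_mono_on hpi
            (((cF (t+h)).sub (cF t)).abs.intervalIntegrable _ _)
            ((continuous_const.mul cG).intervalIntegrable _ _) hptw
      _ = 1/(2*Real.pi) * (h ^ (2*α) *
            ∫ θ in (-Real.pi)..Real.pi, |θ| ^ (2*(2*α)) * Real.exp (-2*t*(1-Real.cos θ))) := by
          rw [intervalIntegral.integral_const_mul]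
      _ ≤ 1/(2*Real.pi) * (h ^ (2*α) * (2 * Real.sqrt (2*Real.pi) *
            (4/Real.pi^2) ^ (-(1:ℝ)/2 - 2*α) * t ^ (-(1:ℝ)/2 - 2*α))) := by
          apply mul_le_mul_of_nonneg_left _ (by positivity : (0:ℝ) ≤ 1/(2*Real.pi))
          apply mul_le_mul_of_nonneg_left step2
          positivity
      _ = c3 * h ^ (2*α) * t ^ (-(1:ℝ)/2 - 2*α) := by rw [hc3]; ring
      _ ≤ (c1 + c2 + c3) * h ^ (2*α) * t ^ (-(1:ℝ)/2 - 2*α) := by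
          have h1 : (0:ℝ) ≤ h ^ (2*α) := Real.rpow_nonneg hh.le _
          have h2 : (0:ℝ) ≤ t ^ (-(1:ℝ)/2 - 2*α) := Real.rpow_nonneg ht.le _
          apply mul_le_mul_of_nonneg_right _ h2
          exact mul_le_mul_of_nonneg_right (by linarith) h1
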